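/- Let d ≥ 1, let rˡ, rᵇ, r^{1,b}, …, r^{d,b}, β₁, …, β_d be real numbers with rˡ ≤ rᵇ and rᵇ ≤ r^{i,b} for every i, and let Bᵇ ∈ ℝ. Define g̃ʰ(y,a) := Σ_{i=1}^d βᵢaᵢ − Σ_{i=1}^d r^{i,b}aᵢ⁺ + rˡ·y + rˡ·Σ_{i=1}^d aᵢ⁻ and gᶜ(x,y,a) := Σ_{i=1}^d βᵢaᵢ + x·rᵇBᵇ + Σ_{i=1}^d r^{i,b}(−aᵢ)⁺ − rˡ·(−y + xBᵇ + Σ_{i=1}^d (−aᵢ)⁻)⁺ + rᵇ·(−y + xBᵇ + Σ_{i=1}^d (−aᵢ)⁻)⁻. Then for every y ≥ 0, every x ∈ ℝ and every a ∈ ℝᵈ: g̃ʰ(y,a) ≤ gᶜ(x,y,a). -/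
import Mathlib


/-- Driver comparison from the proof of Theorem `special contract pricing`:
for `y ≥ 0`, `g̃ʰ(y,a) ≤ gᶜ(x,y,a)`. -/
theorem stmt_6 (d : ℕ) (hd : 1 ≤ d) (rl rb : ℝ) (rib β : Fin d → ℝ) (Bb : ℝ)
    (hlb : rl ≤ rb) (hib : ∀ i, rb ≤ rib i)
    (gth : ℝ → (Fin d → ℝ) → ℝ)
    (hgth : ∀ y a, gth y a = (∑ i, β i * a i) - (∑ i, rib i * max (a i) 0)
      + rl * y + rl * ∑ i, max (-(a i)) 0)
    (gc : ℝ → ℝ → (Fin d → ℝ) → ℝ)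
    (hgc : ∀ x y a, gc x y a = (∑ i, β i * a i) + x * rb * Bb
      + (∑ i, rib i * max (-(a i)) 0)
      - rl * max (-y + x * Bb + ∑ i, max (a i) 0) 0
      + rb * max (-(-y + x * Bb + ∑ i, max (a i) 0)) 0)
    (y : ℝ) (hy : 0 ≤ y) (x : ℝ) (a : Fin d → ℝ) :
    gth y a ≤ gc x y a := by
  rw [hgth, hgc]
  have h1 : rb * (∑ i, max (a i) 0) ≤ ∑ i, rib i * max (a i) 0 := by
    rw [Finset.mul_sum]
    exact Finset.sum_le_sum fun i _ => mul_le_mul_of_nonneg_right (hib i) (le_max_right _ _)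
  have h2 : rb * (∑ i, max (-(a i)) 0) ≤ ∑ i, rib i * max (-(a i)) 0 := by
    rw [Finset.mul_sum]
    exact Finset.sum_le_sum fun i _ => mul_le_mul_of_nonneg_right (hib i) (le_max_right _ _)
  set Sp := ∑ i, max (a i) 0 with hSp
  set Sm := ∑ i, max (-(a i)) 0 with hSm
  have hSp0 : 0 ≤ Sp := Finset.sum_nonneg fun i _ => le_max_right _ _
  have hSm0 : 0 ≤ Sm := Finset.sum_nonneg fun i _ => le_max_right _ _
  rcases le_or_gt 0 (-y + x * Bb + Sp) with h | h
  · rw [max_eq_left h, max_eq_right (by linarith : -(-y + x * Bb + Sp) ≤ 0)]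
    nlinarith [h1, h2, mul_nonneg (sub_nonneg.2 hlb) h,
      mul_nonneg (sub_nonneg.2 hlb) hy, mul_nonneg (sub_nonneg.2 hlb) hSm0]
  · rw [max_eq_right h.le, max_eq_left (by linarith : (0:ℝ) ≤ -(-y + x * Bb + Sp))]
    nlinarith [h1, h2, mul_nonneg (sub_nonneg.2 hlb) hy, mul_nonneg (sub_nonneg.2 hlb) hSm0]
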